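/- Fix integers N ≥ 1 and N_t ≥ 1 and real numbers x, y with y ≥ 0 and x ≥ (N − 1)·y. Then O₁O₆ − Re(M₁(y)·M₆(x)) ≤ (π/4)·N(N−1)(2N−1)(N_t−1)·x − (3π/(4N_t))·N²(N−1)²(N_t−2)·y. -/

import Mathlib

open Real

noncomputable section

/-- `O₁ = N(N−1)(2N−1)/6`. -/
def O₁ (N : ℕ) : ℝ := (N : ℝ) * ((N : ℝ) - 1) * (2 * (N : ℝ) - 1) / 6
/-- `O₂ = N(N−1)/2`. -/
def O₂ (N : ℕ) : ℝ := (N : ℝ) * ((N : ℝ) - 1) / 2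
/-- `O₃ = (N_t−1)/2`. -/
def O₃ (Nt : ℕ) : ℝ := ((Nt : ℝ) - 1) / 2
/-- `O₄ = (N_t−1)(2N_t−1)/6`. -/
def O₄ (Nt : ℕ) : ℝ := ((Nt : ℝ) - 1) * (2 * (Nt : ℝ) - 1) / 6
/-- `O₅ = N`. -/
def O₅ (N : ℕ) : ℝ := (N : ℝ)
/-- `O₆ = 1`. -/
def O₆ (Nt : ℕ) : ℝ := 1

/-- `M₁(y) = Σ_{n<N} n² e^{−2πiny}`. -/
def M₁ (N : ℕ) (y : ℝ) : ℂ :=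
  ∑ n ∈ Finset.range N, (n : ℂ) ^ 2 * Complex.exp (-(2 * (π : ℂ) * Complex.I * n * y))
/-- `M₂(y) = Σ_{n<N} n e^{−2πiny}`. -/
def M₂ (N : ℕ) (y : ℝ) : ℂ :=
  ∑ n ∈ Finset.range N, (n : ℂ) * Complex.exp (-(2 * (π : ℂ) * Complex.I * n * y))
/-- `M₃(x) = (1/N_t) Σ_{m<N_t} m e^{2πimx}`. -/
def M₃ (Nt : ℕ) (x : ℝ) : ℂ :=
  (Nt : ℂ)⁻¹ * ∑ m ∈ Finset.range Nt, (m : ℂ) * Complex.exp (2 * (π : ℂ) * Complex.I * m * x)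
/-- `M₄(x) = (1/N_t) Σ_{m<N_t} m² e^{2πimx}`. -/
def M₄ (Nt : ℕ) (x : ℝ) : ℂ :=
  (Nt : ℂ)⁻¹ * ∑ m ∈ Finset.range Nt, (m : ℂ) ^ 2 * Complex.exp (2 * (π : ℂ) * Complex.I * m * x)
/-- `M₅(y) = Σ_{n<N} e^{−2πiny}`. -/
def M₅ (N : ℕ) (y : ℝ) : ℂ :=
  ∑ n ∈ Finset.range N, Complex.exp (-(2 * (π : ℂ) * Complex.I * n * y))
/-- `M₆(x) = (1/N_t) Σ_{m<N_t} e^{2πimx}`. -/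
def M₆ (Nt : ℕ) (x : ℝ) : ℂ :=
  (Nt : ℂ)⁻¹ * ∑ m ∈ Finset.range Nt, Complex.exp (2 * (π : ℂ) * Complex.I * m * x)

lemma aux_one_sub_cos (θ : ℝ) : 1 - Real.cos θ ≤ |θ| := by
  have h1 : Real.sin (θ / 2) ^ 2 = 1 / 2 - Real.cos θ / 2 := by
    have := Real.sin_sq_eq_half_sub (θ / 2)
    rwa [show 2 * (θ / 2) = θ by ring] at this
  have h2 : Real.sin (θ / 2) ^ 2 ≤ |Real.sin (θ / 2)| := by
    rw [← sq_abs]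
    nlinarith [Real.abs_sin_le_one (θ / 2), abs_nonneg (Real.sin (θ / 2))]
  have h3 : |Real.sin (θ / 2)| ≤ |θ / 2| := Real.abs_sin_le_abs
  rw [abs_div, abs_two] at h3
  nlinarith [abs_nonneg θ]

lemma aux_re (r θ : ℝ) : ((r : ℂ) * Complex.exp ((θ : ℂ) * Complex.I)).re = r * Real.cos θ := by
  rw [Complex.re_ofReal_mul, Complex.exp_ofReal_mul_I_re]

lemma sum_lin (K : ℕ) (a b : ℝ) :
    ∑ m ∈ Finset.range K, (a * (m : ℝ) + b) = a * ((K : ℝ) * ((K : ℝ) - 1) / 2) + b * K := by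
  induction K with
  | zero => simp
  | succ k ih => rw [Finset.sum_range_succ, ih]; push_cast; ring

lemma sum_quad (K : ℕ) (a b : ℝ) :
    ∑ n ∈ Finset.range K, (a * (n : ℝ) ^ 2 + b * (n : ℝ) ^ 3)
      = a * ((K : ℝ) * ((K : ℝ) - 1) * (2 * (K : ℝ) - 1) / 6)
        + b * ((K : ℝ) ^ 2 * ((K : ℝ) - 1) ^ 2 / 4) := by
  induction K with
  | zero => simp
  | succ k ih => rw [Finset.sum_range_succ, ih]; push_cast; ring

/-- **Equation (50), Appendix D.** For `y ≥ 0` and `x ≥ (N−1)y`,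
`O₁O₆ − Re(M₁(y)M₆(x)) ≤ (π/4)N(N−1)(2N−1)(N_t−1)x − (3π/(4N_t))N²(N−1)²(N_t−2)y`. -/
theorem O1O6_minus_re_M1M6_upper_bound
    (N Nt : ℕ) (hN : 1 ≤ N) (hNt : 1 ≤ Nt) (x y : ℝ)
    (hy : 0 ≤ y) (hxy : ((N : ℝ) - 1) * y ≤ x) :
    O₁ N * O₆ Nt - (M₁ N y * M₆ Nt x).re
      ≤ (π / 4) * (N : ℝ) * ((N : ℝ) - 1) * (2 * (N : ℝ) - 1) * ((Nt : ℝ) - 1) * x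
        - (3 * π / (4 * (Nt : ℝ))) * (N : ℝ) ^ 2 * ((N : ℝ) - 1) ^ 2 * ((Nt : ℝ) - 2) * y := by
  have hNt0 : (0 : ℝ) < (Nt : ℝ) := by exact_mod_cast hNt
  have hN1 : (0 : ℝ) ≤ (N : ℝ) - 1 := by
    have : (1 : ℝ) ≤ (N : ℝ) := by exact_mod_cast hN
    linarith
  have hx0 : 0 ≤ x := le_trans (mul_nonneg hN1 hy) hxy
  have hπ := Real.pi_pos
  -- product formula
  have hM : M₁ N y * M₆ Nt x = (((Nt : ℝ)⁻¹ : ℝ) : ℂ) *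
      ∑ n ∈ Finset.range N, ∑ m ∈ Finset.range Nt,
        (((n : ℝ) ^ 2 : ℝ) : ℂ) *
          Complex.exp (((2 * π * ((m : ℝ) * x - (n : ℝ) * y) : ℝ) : ℂ) * Complex.I) := by
    unfold M₁ M₆
    rw [mul_left_comm]
    rw [show (((Nt : ℝ)⁻¹ : ℝ) : ℂ) = (Nt : ℂ)⁻¹ by push_cast; ring]
    congr 1
    rw [Finset.sum_mul_sum]
    refine Finset.sum_congr rfl fun n _ => Finset.sum_congr rfl fun m _ => ?_
    rw [mul_assoc, ← Complex.exp_add]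
    have h1 : -(2 * (π : ℂ) * Complex.I * n * y) + 2 * (π : ℂ) * Complex.I * m * x
        = ((2 * π * ((m : ℝ) * x - (n : ℝ) * y) : ℝ) : ℂ) * Complex.I := by
      push_cast; ring
    rw [h1]
    norm_cast
  have hre : (M₁ N y * M₆ Nt x).re
      = (Nt : ℝ)⁻¹ * ∑ n ∈ Finset.range N, ∑ m ∈ Finset.range Nt,
          (n : ℝ) ^ 2 * Real.cos (2 * π * ((m : ℝ) * x - (n : ℝ) * y)) := by
    rw [hM, Complex.re_ofReal_mul]
    congr 1
    rw [Complex.re_sum]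
    refine Finset.sum_congr rfl fun n _ => ?_
    rw [Complex.re_sum]
    exact Finset.sum_congr rfl fun m _ => aux_re _ _
  have hO : O₁ N * O₆ Nt
      = (Nt : ℝ)⁻¹ * ∑ n ∈ Finset.range N, ∑ m ∈ Finset.range Nt, (n : ℝ) ^ 2 := by
    simp only [Finset.sum_const, Finset.card_range, nsmul_eq_mul, ← Finset.mul_sum]
    have hA : ∑ n ∈ Finset.range N, (n : ℝ) ^ 2
        = (N : ℝ) * ((N : ℝ) - 1) * (2 * (N : ℝ) - 1) / 6 := by
      have := sum_quad N 1 0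
      simpa using this
    rw [hA, O₁, O₆]
    field_simp
  rw [hre, hO, ← mul_sub]
  have hdiff : (∑ n ∈ Finset.range N, ∑ m ∈ Finset.range Nt, (n : ℝ) ^ 2)
      - ∑ n ∈ Finset.range N, ∑ m ∈ Finset.range Nt,
          (n : ℝ) ^ 2 * Real.cos (2 * π * ((m : ℝ) * x - (n : ℝ) * y))
      = ∑ n ∈ Finset.range N, ∑ m ∈ Finset.range Nt,
          ((n : ℝ) ^ 2 - (n : ℝ) ^ 2 * Real.cos (2 * π * ((m : ℝ) * x - (n : ℝ) * y))) := by
    rw [← Finset.sum_sub_distrib]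
    exact Finset.sum_congr rfl fun n _ => (Finset.sum_sub_distrib _ _).symm
  rw [hdiff]
  -- termwise bound
  have key : ∀ n ∈ Finset.range N, ∀ m ∈ Finset.range Nt,
      (n : ℝ) ^ 2 - (n : ℝ) ^ 2 * Real.cos (2 * π * ((m : ℝ) * x - (n : ℝ) * y))
      ≤ 3 * π * (n : ℝ) ^ 2 * ((m : ℝ) * x - (n : ℝ) * y)
          + (if m = 0 then 6 * π * (n : ℝ) ^ 3 * y else 0) := by
    intro n hn m _
    have hn' : (n : ℝ) ≤ (N : ℝ) - 1 := by
      have h := Finset.mem_range.1 hn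
      have : (n : ℝ) + 1 ≤ (N : ℝ) := by exact_mod_cast h
      linarith
    have hny : (n : ℝ) * y ≤ x :=
      le_trans (mul_le_mul_of_nonneg_right hn' hy) hxy
    have hny0 : 0 ≤ (n : ℝ) * y := mul_nonneg (Nat.cast_nonneg n) hy
    have hn2 : (0 : ℝ) ≤ (n : ℝ) ^ 2 := sq_nonneg _
    have hcos := aux_one_sub_cos (2 * π * ((m : ℝ) * x - (n : ℝ) * y))
    rcases Nat.eq_zero_or_pos m with hm0 | hm1
    · subst hm0
      rw [if_pos rfl]
      have habs : |2 * π * (((0 : ℕ) : ℝ) * x - (n : ℝ) * y)| = 2 * π * ((n : ℝ) * y) := by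
        push_cast
        rw [show 2 * π * ((0 : ℝ) * x - (n : ℝ) * y) = -(2 * π * ((n : ℝ) * y)) by ring,
          abs_neg, abs_of_nonneg (by positivity)]
      rw [habs] at hcos
      push_cast at hcos ⊢
      nlinarith [mul_nonneg hn2 hny0]
    · have hm1' : (1 : ℝ) ≤ (m : ℝ) := by exact_mod_cast hm1
      rw [if_neg (by omega : m ≠ 0)]
      have hge : 0 ≤ (m : ℝ) * x - (n : ℝ) * y := by nlinarith
      have habs : |2 * π * ((m : ℝ) * x - (n : ℝ) * y)|
          = 2 * π * ((m : ℝ) * x - (n : ℝ) * y) := abs_of_nonneg (by positivity)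
      rw [habs] at hcos
      nlinarith [mul_nonneg hn2 hge]
  have hsum := Finset.sum_le_sum fun n hn =>
    Finset.sum_le_sum (key n hn)
  -- exact value of bound sum
  have hinner : ∀ n : ℕ,
      ∑ m ∈ Finset.range Nt,
        (3 * π * (n : ℝ) ^ 2 * ((m : ℝ) * x - (n : ℝ) * y)
          + (if m = 0 then 6 * π * (n : ℝ) ^ 3 * y else 0))
      = (3 * π * x * ((Nt : ℝ) * ((Nt : ℝ) - 1) / 2)) * (n : ℝ) ^ 2
          + (-(3 * π * y * (Nt : ℝ)) + 6 * π * y) * (n : ℝ) ^ 3 := by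
    intro n
    rw [Finset.sum_add_distrib]
    have h2 : ∑ m ∈ Finset.range Nt, (if m = 0 then 6 * π * (n : ℝ) ^ 3 * y else 0)
        = 6 * π * (n : ℝ) ^ 3 * y := by
      rw [Finset.sum_ite_eq' (Finset.range Nt) 0 (fun _ => 6 * π * (n : ℝ) ^ 3 * y),
        if_pos (Finset.mem_range.2 hNt)]
    rw [h2]
    have h1 : ∑ m ∈ Finset.range Nt, (3 * π * (n : ℝ) ^ 2 * ((m : ℝ) * x - (n : ℝ) * y))
        = ∑ m ∈ Finset.range Nt,
            ((3 * π * (n : ℝ) ^ 2 * x) * (m : ℝ) + (-(3 * π * (n : ℝ) ^ 3 * y))) :=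
      Finset.sum_congr rfl fun m _ => by ring
    rw [h1, sum_lin]
    ring
  have hval : ∑ n ∈ Finset.range N, ∑ m ∈ Finset.range Nt,
      (3 * π * (n : ℝ) ^ 2 * ((m : ℝ) * x - (n : ℝ) * y)
        + (if m = 0 then 6 * π * (n : ℝ) ^ 3 * y else 0))
      = (3 * π * x * ((Nt : ℝ) * ((Nt : ℝ) - 1) / 2))
          * ((N : ℝ) * ((N : ℝ) - 1) * (2 * (N : ℝ) - 1) / 6)
        + (-(3 * π * y * (Nt : ℝ)) + 6 * π * y) * ((N : ℝ) ^ 2 * ((N : ℝ) - 1) ^ 2 / 4) := by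
    rw [Finset.sum_congr rfl fun n _ => hinner n, sum_quad]
  rw [hval] at hsum
  have hmul := mul_le_mul_of_nonneg_left hsum (inv_nonneg.2 hNt0.le)
  refine le_trans hmul (le_of_eq ?_)
  field_simp
  ring

  

end
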